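/- arXiv:1608.07887 — 4 statements merged into one kernel-verified Lean document; each statement's English description precedes it below -/
import Mathlib

section
/- Let p ∈ (1,∞), q its conjugate, and η a function holomorphic on Re(s) > 1/p. Suppose for every ε > 0 there exist n ∈ ℕ, b_1,…,b_n ∈ ℂ, θ_1,…,θ_n ≥ 1 such that the function h with ∫_0^1 (1 + h(x)) x^{s−1} dx = (1 − η(s)·Σ_k b_k θ_k^{−s})/s for Re(s) > 0 satisfies ‖1_{(0,1)} + h‖_{L^p(0,1)} < ε. Then η has no zeros in the half-plane Re(s) > 1/p. -/
open MeasureTheory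

/-- If the constant function `1` on `(0,1)` can be approximated arbitrarily well in
`L^p(0,1)` by functions `−h` whose Mellin transform is `−(1 − η(s)·∑ b_k θ_k^{−s})/s + 1/s`,
then `η` has no zeros in the half-plane `Re(s) > 1/p`. -/
theorem approximation_implies_nonvanishing
    (p q : ℝ) (hp : 1 < p) (hpq : 1/p + 1/q = 1)
    (η : ℂ → ℂ) (hη : DifferentiableOn ℂ η {s : ℂ | 1/p < s.re})
    (happrox : ∀ ε : ℝ, 0 < ε → ∃ (n : ℕ) (b : Fin n → ℂ) (θ : Fin n → ℝ) (h : ℝ → ℂ),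
      (∀ k, 1 ≤ θ k) ∧ Measurable h ∧
      (∀ s : ℂ, 0 < s.re →
        ∫ x in Set.Ioo (0:ℝ) 1, (1 + h x) * (x:ℂ) ^ (s-1)
          = (1 - η s * ∑ k, b k * ((θ k : ℂ)) ^ (-s)) / s) ∧
      eLpNorm (fun x => 1 + h x) (ENNReal.ofReal p)
          (volume.restrict (Set.Ioo (0:ℝ) 1)) < ENNReal.ofReal ε) :
    ∀ s : ℂ, 1/p < s.re → η s ≠ 0 := by
  intro ρ hρ hzero
  have hp0 : (0:ℝ) < p := by linarith
  have hp1 : 1/p < 1 := by rw [div_lt_one hp0]; exact hp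
  have hp2 : (0:ℝ) < 1/p := by positivity
  have hq0 : (0:ℝ) < q := by
    rcases lt_trichotomy q 0 with hq | hq | hq
    · have : 1/q < 0 := div_neg_of_pos_of_neg one_pos hq
      linarith
    · rw [hq] at hpq; simp at hpq; linarith
    · exact hq
  have hq1 : 1 < q := by
    have h1 : 1/q < 1 := by linarith
    exact (div_lt_one hq0).mp h1
  have hρre : 0 < ρ.re := lt_trans hp2 hρ
  have hρne : ρ ≠ 0 := by
    intro h; rw [h] at hρre; simp at hρre
  set μ := volume.restrict (Set.Ioo (0:ℝ) 1) with hμ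
  set g : ℝ → ℂ := fun x => (x:ℂ) ^ (ρ - 1) with hg
  have hgcont : ContinuousOn g (Set.Ioo (0:ℝ) 1) := by
    intro x hx
    apply ContinuousAt.continuousWithinAt
    exact (continuousAt_cpow_const (Complex.ofReal_mem_slitPlane.mpr hx.1)).comp
      Complex.continuous_ofReal.continuousAt
  have hgmeas : AEMeasurable g μ := by
    rw [hμ]
    exact hgcont.aemeasurable measurableSet_Ioo
  have hgnorm : ∀ x ∈ Set.Ioo (0:ℝ) 1, ‖g x‖ = x ^ (ρ.re - 1) := by
    intro x hx
    rw [hg]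
    rw [Complex.norm_cpow_eq_rpow_re_of_pos hx.1]
    norm_num
  have hexp : (-1:ℝ) < (ρ.re - 1) * q := by
    have h2 : -(1/q) < ρ.re - 1 := by linarith
    have := mul_lt_mul_of_pos_right h2 hq0
    rw [neg_mul, div_mul_cancel₀ _ (ne_of_gt hq0)] at this
    linarith
  have hint : IntegrableOn (fun x : ℝ => x ^ ((ρ.re - 1) * q)) (Set.Ioo (0:ℝ) 1) volume := by
    have := intervalIntegral.intervalIntegrable_rpow' (a := 0) (b := 1) hexp
    rw [intervalIntegrable_iff_integrableOn_Ioc_of_le (by norm_num)] at this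
    exact this.mono_set Set.Ioo_subset_Ioc_self
  -- pointwise identity for the q-th power of the norm of g on (0,1)
  have heq : ∀ x ∈ Set.Ioo (0:ℝ) 1,
      (‖g x‖₊ : ENNReal) ^ q = ENNReal.ofReal (x ^ ((ρ.re - 1) * q)) := by
    intro x hx
    rw [← enorm_eq_nnnorm, ← ofReal_norm, hgnorm x hx,
      ENNReal.ofReal_rpow_of_pos (Real.rpow_pos_of_pos hx.1 _),
      ← Real.rpow_mul hx.1.le]
  have hBfin : (∫⁻ x, (‖g x‖₊ : ENNReal) ^ q ∂μ) < ⊤ := by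
    rw [hμ, setLIntegral_congr_fun measurableSet_Ioo
      (fun x hx => heq x hx)]
    calc ∫⁻ x in Set.Ioo (0:ℝ) 1, ENNReal.ofReal (x ^ ((ρ.re - 1) * q)) ∂volume
        ≤ ∫⁻ x in Set.Ioo (0:ℝ) 1, (‖x ^ ((ρ.re - 1) * q)‖₊ : ENNReal) ∂volume := by
          apply lintegral_mono
          intro x
          exact le_trans (ENNReal.ofReal_le_ofReal (le_abs_self _))
            (le_of_eq (by rw [← Real.norm_eq_abs, ofReal_norm, enorm_eq_nnnorm]))
      _ < ⊤ := hint.2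
  set B : ENNReal := (∫⁻ x, (‖g x‖₊ : ENNReal) ^ q ∂μ) ^ (1/q) with hB
  have hBne : B ≠ ⊤ := by
    rw [hB]
    exact ENNReal.rpow_ne_top_of_nonneg (by positivity) hBfin.ne
  -- choose ε
  have hNpos : (0:ℝ) < ‖(1:ℂ)/ρ‖ := by
    rw [norm_pos_iff]
    exact one_div_ne_zero hρne
  set N : ℝ := ‖(1:ℂ)/ρ‖ with hN
  set t : ℝ := B.toReal with ht
  have ht0 : 0 ≤ t := ENNReal.toReal_nonneg
  have hε : (0:ℝ) < N / (t + 1) := by positivity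
  obtain ⟨n, b, θ, h, hθ, hmeas, hmellin, hnorm⟩ := happrox (N / (t + 1)) hε
  -- the Mellin identity at ρ gives the integral 1/ρ
  have hval : ∫ x in Set.Ioo (0:ℝ) 1, (1 + h x) * (x:ℂ) ^ (ρ-1) = 1/ρ := by
    rw [hmellin ρ hρre, hzero]
    simp
  -- lower bound via the integral
  have hlow : ENNReal.ofReal N ≤ ∫⁻ x, (‖(1 + h x) * g x‖₊ : ENNReal) ∂μ := by
    have hle := enorm_integral_le_lintegral_enorm (μ := μ)
      (fun x => (1 + h x) * (x:ℂ) ^ (ρ-1))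
    have hval' : (∫ (a : ℝ), (1 + h a) * (a:ℂ) ^ (ρ - 1) ∂μ) = 1/ρ := hval
    rw [hval'] at hle
    calc ENNReal.ofReal N = (‖(1:ℂ)/ρ‖₊ : ENNReal) := by
          rw [hN, ofReal_norm, enorm_eq_nnnorm]
      _ ≤ _ := hle
  -- Hölder
  have hf'meas : AEMeasurable (fun x => (‖1 + h x‖₊ : ENNReal)) μ :=
    ((measurable_const.add hmeas).nnnorm.coe_nnreal_ennreal).aemeasurable
  have hg'meas : AEMeasurable (fun x => (‖g x‖₊ : ENNReal)) μ :=
    hgmeas.nnnorm.coe_nnreal_ennreal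
  have hconj : p.HolderConjugate q := Real.holderConjugate_iff.mpr ⟨hp, by simpa [one_div] using hpq⟩
  have hholder := ENNReal.lintegral_mul_le_Lp_mul_Lq μ hconj hf'meas hg'meas
  have hA : (∫⁻ x, (‖1 + h x‖₊ : ENNReal) ^ p ∂μ) ^ (1/p)
      = eLpNorm (fun x => 1 + h x) (ENNReal.ofReal p) μ := by
    rw [eLpNorm_eq_lintegral_rpow_enorm_toReal (by simp [hp0]) (by simp),
      ENNReal.toReal_ofReal hp0.le]
    rfl
  rw [hA, ← hB] at hholder
  have hAB : ENNReal.ofReal N ≤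
      eLpNorm (fun x => 1 + h x) (ENNReal.ofReal p) μ * B := by
    refine le_trans hlow (le_trans ?_ hholder)
    apply lintegral_mono
    intro x
    simp [nnnorm_mul, ENNReal.coe_mul]
  -- conclude
  have hfinal : ENNReal.ofReal N ≤ ENNReal.ofReal (N / (t + 1) * t) := by
    refine le_trans hAB ?_
    calc eLpNorm (fun x => 1 + h x) (ENNReal.ofReal p) μ * B
        ≤ ENNReal.ofReal (N / (t + 1)) * B :=
          mul_le_mul_left hnorm.le _
      _ = ENNReal.ofReal (N / (t + 1)) * ENNReal.ofReal t := by
          rw [ht, ENNReal.ofReal_toReal hBne]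
      _ = ENNReal.ofReal (N / (t + 1) * t) := by
          rw [ENNReal.ofReal_mul hε.le]
  have hlt : N / (t + 1) * t < N := by
    have h1 : N / (t + 1) * t < N / (t + 1) * (t + 1) := by
      apply mul_lt_mul_of_pos_left (by linarith) hε
    rw [div_mul_cancel₀ _ (by linarith : t + 1 ≠ 0)] at h1
    exact h1
  have := lt_of_le_of_lt hfinal (ENNReal.ofReal_lt_ofReal_iff hNpos |>.mpr hlt)
  exact lt_irrefl _ this
end

section
/- For the sequence λ_n with 1 = λ_1 < λ_2 < ⋯, define φ_1(t) = 1 and φ_n(t) = (λ_n^{1−it} − λ_{n−1}^{1−it})/√(λ_n² − λ_{n−1}²) for n ≥ 2. Then ∫_ℝ φ_n(t)·conj(φ_m(t)) dt/(π(1+t²)) = δ_{nm} for all n, m. -/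
open MeasureTheory Set Filter FourierTransform
open scoped Topology Real

noncomputable section

namespace LubAux

lemma norm_cexp_neg (c : ℂ) (x : ℝ) :
    ‖Complex.exp (-(c * x))‖ = Real.exp (-(c.re * x)) := by
  rw [Complex.norm_exp]
  congr 1
  simp [Complex.mul_re]

lemma integrableOn_cexp_neg {c : ℂ} (hc : 0 < c.re) :
    IntegrableOn (fun x : ℝ => Complex.exp (-(c * x))) (Ioi 0) := by
  refine (exp_neg_integrableOn_Ioi 0 hc).mono' ?_ ?_
  · exact (Complex.continuous_exp.comp (by continuity)).aestronglyMeasurable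
  · filter_upwards with x
    rw [norm_cexp_neg c x, neg_mul]

lemma integral_cexp_neg_Ioi {c : ℂ} (hc : 0 < c.re) :
    ∫ x : ℝ in Ioi 0, Complex.exp (-(c * x)) = 1 / c := by
  have hc0 : c ≠ 0 := by
    intro h; rw [h] at hc; simp at hc
  have h1 : Tendsto (fun T : ℝ => ∫ x in (0:ℝ)..T, Complex.exp (-(c * x)))
      atTop (𝓝 (∫ x : ℝ in Ioi 0, Complex.exp (-(c * x)))) :=
    intervalIntegral_tendsto_integral_Ioi 0 (integrableOn_cexp_neg hc) tendsto_id
  have h2 : Tendsto (fun T : ℝ => ∫ x in (0:ℝ)..T, Complex.exp (-(c * x)))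
      atTop (𝓝 (1 / c)) := by
    have heq : ∀ T : ℝ, (∫ x in (0:ℝ)..T, Complex.exp (-(c * x)))
        = (1 - Complex.exp (-c * T)) / c := by
      intro T
      have h := integral_exp_mul_complex (c := -c) (a := (0:ℝ)) (b := T) (by simpa using hc0)
      rw [div_neg] at h
      simp only [neg_mul] at h ⊢
      rw [h]
      simp only [Complex.ofReal_zero, mul_zero, neg_zero, Complex.exp_zero]
      ring
    simp only [heq]
    have h3 : Tendsto (fun T : ℝ => Complex.exp (-c * T)) atTop (𝓝 0) := by
      rw [tendsto_zero_iff_norm_tendsto_zero]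
      have : ∀ T : ℝ, ‖Complex.exp (-c * T)‖ = Real.exp (-(c.re * T)) := by
        intro T; simpa [neg_mul] using norm_cexp_neg c T
      simp only [this]
      exact Real.tendsto_exp_atBot.comp
        (tendsto_neg_atBot_iff.mpr (tendsto_atTop_atTop_of_monotone
          (fun a b hab => by nlinarith) (fun b => ⟨max 1 (b / c.re), by
            have h1 : (1:ℝ) ≤ max 1 (b / c.re) := le_max_left _ _
            have h2 : b / c.re ≤ max 1 (b / c.re) := le_max_right _ _
            calc b = c.re * (b / c.re) := by field_simp
              _ ≤ c.re * max 1 (b / c.re) := by nlinarith⟩)))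
    have := ((tendsto_const_nhds (x := (1:ℂ))).sub h3).div_const c
    simpa using this

  exact tendsto_nhds_unique h1 h2


lemma integrable_exp_neg_abs : Integrable (fun x : ℝ => Real.exp (-|x|)) := by
  have h1 : IntegrableOn (fun x : ℝ => Real.exp (-|x|)) (Iic 0) := by
    refine (integrableOn_exp_Iic 0).congr_fun (fun x hx => ?_) measurableSet_Iic
    rw [abs_of_nonpos hx, neg_neg]
  have h2 : IntegrableOn (fun x : ℝ => Real.exp (-|x|)) (Ioi 0) := by
    refine ((exp_neg_integrableOn_Ioi 0 one_pos).congr_fun (fun x hx => ?_)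
      measurableSet_Ioi)
    rw [abs_of_pos hx]
    simp only [neg_mul, one_mul]
  have := h1.union h2
  rwa [Iic_union_Ioi, integrableOn_univ] at this

lemma integrable_F (a : ℝ) :
    Integrable (fun x : ℝ => Complex.exp (↑(a * x) * Complex.I) * ↑(Real.exp (-|x|))) := by
  refine integrable_exp_neg_abs.mono' ?_ ?_
  · apply Continuous.aestronglyMeasurable
    continuity
  · filter_upwards with x
    simp only [norm_mul, Complex.norm_exp, Complex.norm_real,
      Complex.mul_re, Complex.ofReal_re, Complex.I_re, Complex.ofReal_im, Complex.I_im,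
      mul_zero, mul_one, zero_mul, sub_zero, zero_sub]
    simp [abs_of_pos (Real.exp_pos _)]

lemma key2 (a : ℝ) :
    ∫ x : ℝ, Complex.exp (↑(a * x) * Complex.I) * ↑(Real.exp (-|x|))
      = 2 / (1 + (a : ℂ) ^ 2) := by
  set F : ℝ → ℂ := fun x => Complex.exp (↑(a * x) * Complex.I) * ↑(Real.exp (-|x|)) with hF
  have hint := integrable_F a
  have hsplit : (∫ x : ℝ, F x) = (∫ x in Iic (0:ℝ), F x) + ∫ x in Ioi (0:ℝ), F x :=
    (intervalIntegral.integral_Iic_add_Ioi hint.integrableOn hint.integrableOn).symm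
  have hc1 : ((1 : ℂ) - a * Complex.I).re > 0 := by simp
  have hc2 : ((1 : ℂ) + a * Complex.I).re > 0 := by simp
  have hpos : ∫ x in Ioi (0:ℝ), F x = 1 / (1 - a * Complex.I) := by
    rw [← integral_cexp_neg_Ioi hc1]
    refine setIntegral_congr_fun measurableSet_Ioi (fun x hx => ?_)
    rw [hF]
    simp only
    rw [abs_of_pos hx, Complex.ofReal_exp, ← Complex.exp_add]
    congr 1
    push_cast
    ring
  have hneg : ∫ x in Iic (0:ℝ), F x = 1 / (1 + a * Complex.I) := by
    have : ∫ x in Iic (0:ℝ), F x = ∫ x in Ioi (-(0:ℝ)), F (-x) := by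
      rw [← integral_comp_neg_Iic]
      refine setIntegral_congr_fun measurableSet_Iic (fun x hx => ?_)
      rw [neg_neg]
    rw [this, neg_zero, ← integral_cexp_neg_Ioi hc2]
    refine setIntegral_congr_fun measurableSet_Ioi (fun x hx => ?_)
    rw [hF]
    simp only
    rw [abs_neg, abs_of_pos hx, Complex.ofReal_exp, ← Complex.exp_add]
    congr 1
    push_cast
    ring
  rw [hsplit, hpos, hneg]
  have h1 : (1 : ℂ) - a * Complex.I ≠ 0 := by
    intro h
    have := congrArg Complex.re h
    simp at this
  have h2 : (1 : ℂ) + a * Complex.I ≠ 0 := by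
    intro h
    have := congrArg Complex.re h
    simp at this
  have h3 : (1 : ℂ) + (a:ℂ)^2 = (1 - a * Complex.I) * (1 + a * Complex.I) := by
    have := Complex.I_sq
    ring_nf
    rw [Complex.I_sq]
    ring
  rw [h3]
  field_simp
  ring


def f0 (x : ℝ) : ℂ := ((Real.exp (-|x|) : ℝ) : ℂ)

lemma f0_cont : Continuous f0 := by
  unfold f0; continuity

lemma f0_int : Integrable f0 := integrable_exp_neg_abs.ofReal

lemma fourier_f0 (w : ℝ) : 𝓕 f0 w = ((2 / (1 + (2*π*w)^2) : ℝ) : ℂ) := by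
  rw [Real.fourier_real_eq_integral_exp_smul]
  have h := key2 (-(2*π*w))
  have : ∀ v : ℝ, Complex.exp (↑(-2 * π * v * w) * Complex.I) • f0 v
      = Complex.exp (↑(-(2*π*w) * v) * Complex.I) * ↑(Real.exp (-|v|)) := by
    intro v
    rw [smul_eq_mul]
    congr 3
    push_cast
    ring
  simp_rw [this, h]
  push_cast
  congr 1
  ring

lemma fourier_f0_int : Integrable (𝓕 f0) := by
  have : 𝓕 f0 = fun w => ((2 / (1 + (2*π*w)^2) : ℝ) : ℂ) := funext fourier_f0
  rw [this]
  apply Integrable.ofReal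
  have h1 : Integrable (fun w : ℝ => (1 + w^2)⁻¹) := by
    simpa using integrable_inv_one_add_sq
  have h2 := (h1.comp_mul_left' (R := 2*π) (by positivity)).const_mul 2
  exact h2


lemma inv_f0 (c : ℝ) :
    ∫ v : ℝ, Complex.exp (↑(2 * π * (v * c)) * Complex.I) * ((2 / (1 + (2*π*v)^2) : ℝ) : ℂ)
      = ((Real.exp (-|c|) : ℝ) : ℂ) := by
  have h := f0_int.fourierInv_fourier_eq fourier_f0_int (f0_cont.continuousAt (x := c))
  rw [Real.fourierInv_eq'] at h
  simp_rw [fourier_f0, smul_eq_mul, RCLike.inner_apply, conj_trivial] at h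
  simpa only [f0, mul_comm c] using h

lemma cauchy (c : ℝ) :
    ∫ t : ℝ, Complex.exp (↑(c * t) * Complex.I) / ((π * (1 + t^2) : ℝ) : ℂ)
      = ((Real.exp (-|c|) : ℝ) : ℂ) := by
  have hπ : (π : ℝ) ≠ 0 := Real.pi_ne_zero
  set g : ℝ → ℂ := fun t => Complex.exp (↑(c * t) * Complex.I) / ((π * (1 + t^2) : ℝ) : ℂ)
    with hg
  have key : ∀ v : ℝ,
      Complex.exp (↑(2 * π * (v * c)) * Complex.I) * ((2 / (1 + (2*π*v)^2) : ℝ) : ℂ)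
      = (2*π : ℝ) • g (2*π * v) := by
    intro v
    rw [hg]
    simp only
    have h1 : 2 * π * (v * c) = c * (2 * π * v) := by ring
    rw [h1, Complex.real_smul]
    have h2 : (0:ℝ) < 1 + (2*π*v)^2 := by positivity
    have hB : ((π * (1 + (2*π*v)^2) : ℝ) : ℂ) ≠ 0 := by
      simp only [ne_eq, Complex.ofReal_eq_zero]
      positivity
    have hB2 : ((1 + (2*π*v)^2 : ℝ) : ℂ) ≠ 0 := by
      simp only [ne_eq, Complex.ofReal_eq_zero]
      positivity
    have hπc : ((π : ℝ) : ℂ) ≠ 0 := by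
      simp [Real.pi_ne_zero]
    have hswap : ((2*π : ℝ) : ℂ)
          * (Complex.exp (↑(c * (2*π*v)) * Complex.I) / ((π * (1 + (2*π*v)^2) : ℝ) : ℂ))
        = Complex.exp (↑(c * (2*π*v)) * Complex.I)
          * (((2*π : ℝ):ℂ) / ((π * (1 + (2*π*v)^2) : ℝ):ℂ)) := by ring
    rw [hswap]
    congr 1
    push_cast
    rw [mul_comm (2:ℂ) ((π:ℝ):ℂ), mul_div_mul_left _ _ hπc]
  have h2 := inv_f0 c
  simp_rw [key] at h2
  rw [integral_smul, Measure.integral_comp_mul_left g (2*π), smul_smul,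
    abs_of_pos (by positivity : (0:ℝ) < (2*π)⁻¹),
    mul_inv_cancel₀ (by positivity : (2*π : ℝ) ≠ 0), one_smul] at h2
  exact h2

lemma cauchy_integrable (c : ℝ) :
    Integrable (fun t : ℝ => Complex.exp (↑(c * t) * Complex.I) / ((π * (1 + t^2) : ℝ) : ℂ)) := by
  have h1 : Integrable (fun t : ℝ => π⁻¹ * (1 + t^2)⁻¹) :=
    integrable_inv_one_add_sq.const_mul π⁻¹
  refine h1.mono' ?_ ?_
  · apply Continuous.aestronglyMeasurable
    apply Continuous.div
    · continuity
    · continuity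
    · intro t
      simp only [ne_eq, Complex.ofReal_eq_zero]
      positivity
  · filter_upwards with t
    have hpos : (0:ℝ) < π * (1 + t^2) := by positivity
    rw [norm_div, Complex.norm_exp, Complex.norm_real,
      Real.norm_eq_abs, abs_of_pos hpos]
    have : (↑(c * t) * Complex.I).re = 0 := by simp
    rw [this, Real.exp_zero, one_div, mul_inv]

lemma cpow_mul_conj_cpow {a b : ℝ} (ha : 0 < a) (hb : 0 < b) (t : ℝ) :
    (a:ℂ) ^ ((1:ℂ) - Complex.I * t) * (starRingEnd ℂ) ((b:ℂ) ^ ((1:ℂ) - Complex.I * t))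
      = ((a*b : ℝ) : ℂ)
        * Complex.exp (↑((Real.log b - Real.log a) * t) * Complex.I) := by
  have ha' : (a:ℂ) ≠ 0 := Complex.ofReal_ne_zero.mpr ha.ne'
  have hb' : (b:ℂ) ≠ 0 := Complex.ofReal_ne_zero.mpr hb.ne'
  rw [Complex.cpow_def_of_ne_zero ha', Complex.cpow_def_of_ne_zero hb',
    ← Complex.exp_conj, ← Complex.exp_add]
  have hab : ((a*b:ℝ):ℂ) = Complex.exp (↑(Real.log a + Real.log b) : ℂ) := by
    rw [← Complex.ofReal_exp, Real.exp_add, Real.exp_log ha, Real.exp_log hb]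
  rw [hab, ← Complex.exp_add]
  congr 1
  rw [← Complex.ofReal_log ha.le, ← Complex.ofReal_log hb.le]
  simp only [map_mul, map_sub, map_one, Complex.conj_ofReal, Complex.conj_I]
  push_cast
  ring

lemma K_integrable {a b : ℝ} (ha : 0 < a) (hb : 0 < b) :
    Integrable (fun t : ℝ =>
      (a:ℂ) ^ ((1:ℂ) - Complex.I * t) * (starRingEnd ℂ) ((b:ℂ) ^ ((1:ℂ) - Complex.I * t))
        / ((π * (1 + t^2) : ℝ) : ℂ)) := by
  have heq : (fun t : ℝ =>
      (a:ℂ) ^ ((1:ℂ) - Complex.I * t) * (starRingEnd ℂ) ((b:ℂ) ^ ((1:ℂ) - Complex.I * t))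
        / ((π * (1 + t^2) : ℝ) : ℂ))
      = fun t : ℝ => ((a*b:ℝ):ℂ)
        * (Complex.exp (↑((Real.log b - Real.log a) * t) * Complex.I)
            / ((π * (1 + t^2) : ℝ) : ℂ)) := by
    funext t
    rw [cpow_mul_conj_cpow ha hb t]
    ring
  rw [heq]
  exact (cauchy_integrable _).const_mul _

lemma K_integral {a b : ℝ} (ha : 1 ≤ a) (hb : 1 ≤ b) :
    ∫ t : ℝ,
      (a:ℂ) ^ ((1:ℂ) - Complex.I * t) * (starRingEnd ℂ) ((b:ℂ) ^ ((1:ℂ) - Complex.I * t))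
        / ((π * (1 + t^2) : ℝ) : ℂ)
      = (((min a b)^2 : ℝ) : ℂ) := by
  have ha0 : (0:ℝ) < a := lt_of_lt_of_le one_pos ha
  have hb0 : (0:ℝ) < b := lt_of_lt_of_le one_pos hb
  have heq : (fun t : ℝ =>
      (a:ℂ) ^ ((1:ℂ) - Complex.I * t) * (starRingEnd ℂ) ((b:ℂ) ^ ((1:ℂ) - Complex.I * t))
        / ((π * (1 + t^2) : ℝ) : ℂ))
      = fun t : ℝ => ((a*b:ℝ):ℂ)
        * (Complex.exp (↑((Real.log b - Real.log a) * t) * Complex.I)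
            / ((π * (1 + t^2) : ℝ) : ℂ)) := by
    funext t
    rw [cpow_mul_conj_cpow ha0 hb0 t]
    ring
  rw [heq, integral_const_mul, cauchy]
  rw [← Complex.ofReal_mul]
  congr 1
  rcases le_total a b with h | h
  · have hlog : Real.log a ≤ Real.log b := Real.log_le_log ha0 h
    rw [min_eq_left h, abs_of_nonneg (sub_nonneg.mpr hlog), neg_sub, Real.exp_sub,
      Real.exp_log ha0, Real.exp_log hb0]
    field_simp
  · have hlog : Real.log b ≤ Real.log a := Real.log_le_log hb0 h
    rw [min_eq_right h, abs_of_nonpos (sub_nonpos.mpr hlog), neg_neg, Real.exp_sub,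
      Real.exp_log hb0, Real.exp_log ha0]
    field_simp

lemma four_K {a b c d : ℝ} (ha : 1 ≤ a) (hb : 1 ≤ b) (hc : 1 ≤ c) (hd : 1 ≤ d)
    (s r : ℝ) :
    ∫ t : ℝ,
      (((a:ℂ) ^ ((1:ℂ) - Complex.I * t) - (b:ℂ) ^ ((1:ℂ) - Complex.I * t)) / (s:ℂ))
        * (starRingEnd ℂ)
            (((c:ℂ) ^ ((1:ℂ) - Complex.I * t) - (d:ℂ) ^ ((1:ℂ) - Complex.I * t)) / (r:ℂ))
        / ((π * (1 + t^2) : ℝ) : ℂ)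
      = (((min a c)^2 - (min a d)^2 - (min b c)^2 + (min b d)^2 : ℝ) : ℂ)
          / ((s * r : ℝ) : ℂ) := by
  have ha0 : (0:ℝ) < a := lt_of_lt_of_le one_pos ha
  have hb0 : (0:ℝ) < b := lt_of_lt_of_le one_pos hb
  have hc0 : (0:ℝ) < c := lt_of_lt_of_le one_pos hc
  have hd0 : (0:ℝ) < d := lt_of_lt_of_le one_pos hd
  set K : ℝ → ℝ → ℝ → ℂ := fun x y t =>
    (x:ℂ) ^ ((1:ℂ) - Complex.I * t) * (starRingEnd ℂ) ((y:ℂ) ^ ((1:ℂ) - Complex.I * t))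
      / ((π * (1 + t^2) : ℝ) : ℂ) with hK
  have hptw : (fun t : ℝ =>
      (((a:ℂ) ^ ((1:ℂ) - Complex.I * t) - (b:ℂ) ^ ((1:ℂ) - Complex.I * t)) / (s:ℂ))
        * (starRingEnd ℂ)
            (((c:ℂ) ^ ((1:ℂ) - Complex.I * t) - (d:ℂ) ^ ((1:ℂ) - Complex.I * t)) / (r:ℂ))
        / ((π * (1 + t^2) : ℝ) : ℂ))
      = fun t => ((s*r:ℝ):ℂ)⁻¹ * ((K a c t - K a d t) - (K b c t - K b d t)) := by
    funext t
    rw [hK]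
    simp only [map_div₀, map_sub, Complex.conj_ofReal]
    push_cast
    ring
  have hKac : Integrable (fun t : ℝ => K a c t) := K_integrable ha0 hc0
  have hKad : Integrable (fun t : ℝ => K a d t) := K_integrable ha0 hd0
  have hKbc : Integrable (fun t : ℝ => K b c t) := K_integrable hb0 hc0
  have hKbd : Integrable (fun t : ℝ => K b d t) := K_integrable hb0 hd0
  have h1 : Integrable (fun t : ℝ => K a c t - K a d t) := hKac.sub hKad
  have h2 : Integrable (fun t : ℝ => K b c t - K b d t) := hKbc.sub hKbd
  rw [hptw, integral_const_mul, integral_sub h1 h2, integral_sub hKac hKad,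
    integral_sub hKbc hKbd]
  have e1 : ∫ t : ℝ, K a c t = (((min a c)^2 : ℝ) : ℂ) := K_integral ha hc
  have e2 : ∫ t : ℝ, K a d t = (((min a d)^2 : ℝ) : ℂ) := K_integral ha hd
  have e3 : ∫ t : ℝ, K b c t = (((min b c)^2 : ℝ) : ℂ) := K_integral hb hc
  have e4 : ∫ t : ℝ, K b d t = (((min b d)^2 : ℝ) : ℂ) := K_integral hb hd
  rw [e1, e2, e3, e4]
  rw [div_eq_inv_mul]
  push_cast
  ring


lemma two_K {c d : ℝ} (hc : 1 ≤ c) (hd : 1 ≤ d) (r : ℝ) :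
    ∫ t : ℝ,
      (1 : ℂ) * (starRingEnd ℂ)
          (((c:ℂ) ^ ((1:ℂ) - Complex.I * t) - (d:ℂ) ^ ((1:ℂ) - Complex.I * t)) / (r:ℂ))
        / ((π * (1 + t^2) : ℝ) : ℂ)
      = (((min 1 c)^2 - (min 1 d)^2 : ℝ) : ℂ) / ((r : ℝ) : ℂ) := by
  have hc0 : (0:ℝ) < c := lt_of_lt_of_le one_pos hc
  have hd0 : (0:ℝ) < d := lt_of_lt_of_le one_pos hd
  set K : ℝ → ℝ → ℝ → ℂ := fun x y t =>
    (x:ℂ) ^ ((1:ℂ) - Complex.I * t) * (starRingEnd ℂ) ((y:ℂ) ^ ((1:ℂ) - Complex.I * t))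
      / ((π * (1 + t^2) : ℝ) : ℂ) with hK
  have hptw : (fun t : ℝ =>
      (1 : ℂ) * (starRingEnd ℂ)
          (((c:ℂ) ^ ((1:ℂ) - Complex.I * t) - (d:ℂ) ^ ((1:ℂ) - Complex.I * t)) / (r:ℂ))
        / ((π * (1 + t^2) : ℝ) : ℂ))
      = fun t => ((r:ℝ):ℂ)⁻¹ * (K 1 c t - K 1 d t) := by
    funext t
    rw [hK]
    simp only [map_div₀, map_sub, Complex.conj_ofReal, Complex.ofReal_one, Complex.one_cpow]
    ring
  have hK1c : Integrable (fun t : ℝ => K 1 c t) := K_integrable one_pos hc0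
  have hK1d : Integrable (fun t : ℝ => K 1 d t) := K_integrable one_pos hd0
  rw [hptw, integral_const_mul, integral_sub hK1c hK1d]
  have e1 : ∫ t : ℝ, K 1 c t = (((min 1 c)^2 : ℝ) : ℂ) := K_integral le_rfl hc
  have e2 : ∫ t : ℝ, K 1 d t = (((min 1 d)^2 : ℝ) : ℂ) := K_integral le_rfl hd
  rw [e1, e2, div_eq_inv_mul]
  push_cast
  ring

lemma diag_base :
    ∫ t : ℝ, (1 : ℂ) * (starRingEnd ℂ) (1 : ℂ) / ((π * (1 + t^2) : ℝ) : ℂ) = 1 := by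
  have h := K_integral (le_refl (1:ℝ)) (le_refl (1:ℝ))
  simp only [Complex.ofReal_one, Complex.one_cpow, min_self, one_pow] at h
  exact h

end LubAux

open LubAux

/-- Lubinsky's general Dirichlet orthogonal polynomials: `φ_1(t) = 1`,
`φ_n(t) = (λ_n^{1−it} − λ_{n−1}^{1−it})/√(λ_n² − λ_{n−1}²)` for `n ≥ 2`. -/
noncomputable def lubinskyPhi (lam : ℕ → ℝ) (n : ℕ) (t : ℝ) : ℂ :=
  if n = 1 then 1 else
    (((lam n : ℝ) : ℂ) ^ ((1 : ℂ) - Complex.I * t)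
        - ((lam (n - 1) : ℝ) : ℂ) ^ ((1 : ℂ) - Complex.I * t))
      / ((Real.sqrt ((lam n)^2 - (lam (n - 1))^2) : ℝ) : ℂ)

/-- Orthonormality with respect to the arctangent density:
`∫_ℝ φ_n(t)·conj(φ_m(t)) dt/(π(1+t²)) = δ_{nm}`. -/
theorem lubinskyPhi_orthonormal
    (lam : ℕ → ℝ) (hlam1 : lam 1 = 1) (hmono : ∀ n : ℕ, 1 ≤ n → lam n < lam (n+1))
    (n m : ℕ) (hn : 1 ≤ n) (hm : 1 ≤ m) :
    ∫ t : ℝ, lubinskyPhi lam n t * (starRingEnd ℂ) (lubinskyPhi lam m t)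
        / ((Real.pi * (1 + t^2) : ℝ) : ℂ)
      = if n = m then 1 else 0 := by
  classical
  have hlt : ∀ k l : ℕ, 1 ≤ k → k < l → lam k < lam l := by
    intro k l hk hkl
    induction l with
    | zero => omega
    | succ l ih =>
      rcases Nat.lt_or_ge k l with h | h
      · exact (ih h).trans (hmono l (by omega))
      · have : k = l := by omega
        subst this
        exact hmono k hk
  have hge : ∀ k : ℕ, 1 ≤ k → 1 ≤ lam k := by
    intro k hk
    rcases Nat.lt_or_ge 1 k with h | h
    · exact le_of_lt (hlam1 ▸ hlt 1 k le_rfl h)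
    · have : k = 1 := by omega
      rw [show k = 1 by omega, hlam1]
  -- diagonal
  have diag : ∀ p : ℕ, 1 ≤ p →
      ∫ t : ℝ, lubinskyPhi lam p t * (starRingEnd ℂ) (lubinskyPhi lam p t)
        / ((Real.pi * (1 + t^2) : ℝ) : ℂ) = 1 := by
    intro p hp
    rcases Nat.eq_or_lt_of_le hp with hp1 | hp2
    · simp only [lubinskyPhi, if_pos hp1.symm]
      exact diag_base
    · have hp1 : ¬ p = 1 := by omega
      simp only [lubinskyPhi, if_neg hp1]
      set a := lam p
      set b := lam (p - 1)
      have hbge : 1 ≤ b := hge (p-1) (by omega)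
      have hba : b < a := by
        have := hmono (p-1) (by omega)
        have hq : p - 1 + 1 = p := by omega
        rwa [hq] at this
      have hage : 1 ≤ a := hbge.trans hba.le
      rw [four_K hage hbge hage hbge]
      have hpos : (0:ℝ) < a^2 - b^2 := by nlinarith
      have hsq : Real.sqrt (a^2 - b^2) * Real.sqrt (a^2 - b^2) = a^2 - b^2 :=
        Real.mul_self_sqrt hpos.le
      rw [hsq, min_self, min_eq_right hba.le, min_comm b a, min_eq_right hba.le, min_self]
      have hnum : a ^ 2 - b ^ 2 - b ^ 2 + b ^ 2 = a^2 - b^2 := by ring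
      rw [hnum, div_self (Complex.ofReal_ne_zero.mpr hpos.ne')]
  -- ordered off-diagonal
  have off_diag : ∀ p q : ℕ, 1 ≤ p → p < q →
      ∫ t : ℝ, lubinskyPhi lam p t * (starRingEnd ℂ) (lubinskyPhi lam q t)
        / ((Real.pi * (1 + t^2) : ℝ) : ℂ) = 0 := by
    intro p q hp hpq
    have hq1 : ¬ q = 1 := by omega
    set c := lam q
    set d := lam (q - 1)
    have hdge : 1 ≤ d := hge (q-1) (by omega)
    have hdc : d < c := by
      have := hmono (q-1) (by omega)
      have hq : q - 1 + 1 = q := by omega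
      rwa [hq] at this
    have hcge : 1 ≤ c := hdge.trans hdc.le
    rcases Nat.eq_or_lt_of_le hp with hp1 | hp2
    · simp only [lubinskyPhi, if_pos hp1.symm, if_neg hq1]
      rw [two_K hcge hdge]
      rw [min_eq_left hcge, min_eq_left hdge]
      norm_num
    · have hp1 : ¬ p = 1 := by omega
      simp only [lubinskyPhi, if_neg hp1, if_neg hq1]
      set a := lam p
      set b := lam (p - 1)
      have hbge : 1 ≤ b := hge (p-1) (by omega)
      have hba : b < a := by
        have := hmono (p-1) (by omega)
        have hq : p - 1 + 1 = p := by omega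
        rwa [hq] at this
      have hage : 1 ≤ a := hbge.trans hba.le
      have had : a ≤ d := by
        rcases Nat.eq_or_lt_of_le (show p ≤ q - 1 by omega) with h | h
        · exact le_of_eq (show lam p = lam (q-1) by rw [h])
        · exact (hlt p (q-1) hp h).le
      have hac : a ≤ c := had.trans hdc.le
      have hbd : b ≤ d := hba.le.trans had
      have hbc : b ≤ c := hbd.trans hdc.le
      rw [four_K hage hbge hcge hdge]
      rw [min_eq_left hac, min_eq_left had, min_eq_left hbc, min_eq_left hbd]
      have : a ^ 2 - a ^ 2 - b ^ 2 + b ^ 2 = 0 := by ring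
      rw [this]
      norm_num
  rcases lt_trichotomy n m with h | h | h
  · rw [if_neg (by omega)]
    exact off_diag n m hn h
  · subst h
    rw [if_pos rfl]
    exact diag n hn
  · rw [if_neg (by omega)]
    have h0 := off_diag m n hm h
    have hconj : (fun t : ℝ => lubinskyPhi lam n t * (starRingEnd ℂ) (lubinskyPhi lam m t)
          / ((Real.pi * (1 + t^2) : ℝ) : ℂ))
        = fun t : ℝ => (starRingEnd ℂ) (lubinskyPhi lam m t * (starRingEnd ℂ) (lubinskyPhi lam n t)
          / ((Real.pi * (1 + t^2) : ℝ) : ℂ)) := by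
      funext t
      rw [map_div₀, map_mul, Complex.conj_conj, Complex.conj_ofReal]
      ring
    rw [hconj, integral_conj, h0, map_zero]
end
end

section
/- Let p ∈ (1,2] and suppose the kernel K_n satisfies K_n(u,u) = (p/2)|1/p + iu|²·log n·(1+o(1)) uniformly on compacts, and |K_n(u,v)| ≤ p·|1/p+iu||1/p−iv|/|u−v| + o(log n) for u ≠ v. Then for distinct reals t_1,…,t_m, the matrix H = (K_n(t_i,t_j)) satisfies det H / (log n)^m → (p/2)^m·∏_{j=1}^m |1/p + i t_j|² as n → ∞, and H is nonsingular for all sufficiently large n. -/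
open Filter Finset Topology

/-- If the kernels `K_n` satisfy `K_n(u,u) = (p/2)|1/p+iu|²·log n·(1+o(1))` uniformly on
compacts and `|K_n(u,v)| ≤ p|1/p+iu||1/p−iv|/|u−v| + o(log n)`, then for distinct reals
`t_1,…,t_m`, `det (K_n(t_i,t_j)) / (log n)^m → (p/2)^m ∏ |1/p+it_j|²`, and the matrix is
nonsingular for all large `n`. -/
theorem kernel_det_asymptotics
    (p : ℝ) (hp1 : 1 < p) (hp2 : p ≤ 2)
    (K : ℕ → ℝ → ℝ → ℂ)
    (hdiag : ∀ S : Set ℝ, IsCompact S →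
      TendstoUniformlyOn
        (fun (n : ℕ) (u : ℝ) =>
          K n u u / (((p/2) * (1/p^2 + u^2) * Real.log n : ℝ) : ℂ))
        1 atTop S)
    (hoff : ∀ S : Set ℝ, IsCompact S → ∀ ε : ℝ, 0 < ε → ∀ᶠ n : ℕ in atTop,
      ∀ u ∈ S, ∀ v ∈ S, u ≠ v →
        ‖K n u v‖
          ≤ p * Real.sqrt (1/p^2 + u^2) * Real.sqrt (1/p^2 + v^2) / |u - v|
            + ε * Real.log n)
    (m : ℕ) (t : Fin m → ℝ) (ht : Function.Injective t) :
    Tendsto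
      (fun n : ℕ =>
        (Matrix.of fun i j : Fin m => K n (t i) (t j)).det / (((Real.log n) ^ m : ℝ) : ℂ))
      atTop (𝓝 (((p/2)^m * ∏ j, (1/p^2 + (t j)^2) : ℝ) : ℂ))
    ∧ ∀ᶠ n : ℕ in atTop, (Matrix.of fun i j : Fin m => K n (t i) (t j)).det ≠ 0 := by
  have hp0 : 0 < p := lt_trans one_pos hp1
  have hlog : Tendsto (fun n : ℕ => Real.log n) atTop atTop :=
    Real.tendsto_log_atTop.comp tendsto_natCast_atTop_atTop
  -- diagonal entries
  have hdiagpt : ∀ u : ℝ, Tendsto (fun n : ℕ => K n u u / ((Real.log n : ℝ) : ℂ)) atTop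
      (𝓝 (((p/2) * (1/p^2 + u^2) : ℝ) : ℂ)) := by
    intro u
    have h1 := (hdiag {u} isCompact_singleton).tendsto_at (Set.mem_singleton u)
    simp only [Pi.one_apply] at h1
    have ha : ((( (p/2) * (1/p^2 + u^2) : ℝ)) : ℂ) ≠ 0 := by
      have : (0:ℝ) < (p/2) * (1/p^2 + u^2) := by positivity
      exact_mod_cast this.ne'
    have h2 := h1.mul (tendsto_const_nhds (x := (((p/2) * (1/p^2 + u^2) : ℝ) : ℂ)))
    rw [one_mul] at h2
    refine h2.congr (fun n => ?_)
    set a : ℂ := (((p/2) * (1/p^2 + u^2) : ℝ) : ℂ)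
    have : (((p/2) * (1/p^2 + u^2) * Real.log n : ℝ) : ℂ) = a * ((Real.log n : ℝ) : ℂ) := by
      push_cast [a]; ring
    rw [this, div_mul_eq_mul_div, mul_comm (K n u u) a, mul_div_mul_left _ _ ha]
  -- off-diagonal entries
  have hoffpt : ∀ u v : ℝ, u ≠ v → Tendsto (fun n : ℕ => K n u v / ((Real.log n : ℝ) : ℂ))
      atTop (𝓝 0) := by
    intro u v huv
    rw [tendsto_zero_iff_norm_tendsto_zero]
    rw [NormedAddCommGroup.tendsto_nhds_zero]
    intro ε hε
    set C : ℝ := p * Real.sqrt (1/p^2 + u^2) * Real.sqrt (1/p^2 + v^2) / |u - v|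
    have hC : 0 ≤ C := by
      have : 0 < |u - v| := abs_pos.mpr (sub_ne_zero.mpr huv)
      positivity
    have h1 := hoff {u, v} (Set.Finite.isCompact (by simp)) (ε/2) (by positivity)
    have h2 : ∀ᶠ n : ℕ in atTop, max 1 (2*C/ε) < Real.log n := hlog.eventually_gt_atTop _
    filter_upwards [h1, h2] with n hn hln
    have hln1 : 1 < Real.log n := lt_of_le_of_lt (le_max_left _ _) hln
    have hln0 : 0 < Real.log n := lt_trans one_pos hln1
    have hb := hn u (by simp) v (by simp) huv
    have : ‖K n u v / ((Real.log n : ℝ) : ℂ)‖ = ‖K n u v‖ / Real.log n := by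
      rw [norm_div, Complex.norm_real, Real.norm_eq_abs, abs_of_pos hln0]
    rw [norm_norm, this]
    have hstep : ‖K n u v‖ / Real.log n ≤ C / Real.log n + ε/2 := by
      rw [div_add' _ _ _ hln0.ne', div_le_div_iff_of_pos_right hln0]
      exact hb
    have hC2 : C / Real.log n < ε/2 := by
      rw [div_lt_iff₀ hln0]
      have h3 : 2*C/ε < Real.log n := lt_of_le_of_lt (le_max_right _ _) hln
      calc C = ε/2 * (2*C/ε) := by field_simp
        _ < ε/2 * Real.log n := by
            exact mul_lt_mul_of_pos_left h3 (by positivity)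
    calc ‖K n u v‖ / Real.log n ≤ C / Real.log n + ε/2 := hstep
      _ < ε/2 + ε/2 := by linarith
      _ = ε := by ring
  -- matrix convergence
  set D : Matrix (Fin m) (Fin m) ℂ :=
    Matrix.diagonal fun j => (((p/2) * (1/p^2 + (t j)^2) : ℝ) : ℂ) with hD
  have hM : Tendsto (fun n : ℕ => Matrix.of fun i j : Fin m =>
      K n (t i) (t j) / ((Real.log n : ℝ) : ℂ)) atTop (𝓝 D) := by
    refine tendsto_pi_nhds.mpr ?_
    intro i
    rw [tendsto_pi_nhds]
    intro j
    rcases eq_or_ne i j with rfl | hij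
    · simpa [hD, Matrix.diagonal] using hdiagpt (t i)
    · have : t i ≠ t j := fun h => hij (ht h)
      simpa [hD, Matrix.diagonal_apply_ne _ hij] using hoffpt (t i) (t j) this
  have hdet : Tendsto (fun n : ℕ => (Matrix.of fun i j : Fin m =>
      K n (t i) (t j) / ((Real.log n : ℝ) : ℂ)).det) atTop (𝓝 D.det) :=
    ((Continuous.matrix_det continuous_id).tendsto D).comp hM
  have hEq : ∀ n : ℕ, (Matrix.of fun i j : Fin m =>
      K n (t i) (t j) / ((Real.log n : ℝ) : ℂ)).det
      = (Matrix.of fun i j : Fin m => K n (t i) (t j)).det / (((Real.log n) ^ m : ℝ) : ℂ) := by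
    intro n
    have : (Matrix.of fun i j : Fin m => K n (t i) (t j) / ((Real.log n : ℝ) : ℂ))
        = ((Real.log n : ℂ))⁻¹ • (Matrix.of fun i j : Fin m => K n (t i) (t j)) := by
      ext i j
      simp [Matrix.smul_apply, div_eq_inv_mul]
    rw [this, Matrix.det_smul, Fintype.card_fin]
    push_cast
    rw [div_eq_mul_inv, inv_pow, mul_comm]
  have hDdet : D.det = (((p/2)^m * ∏ j, (1/p^2 + (t j)^2) : ℝ) : ℂ) := by
    rw [hD, Matrix.det_diagonal]
    push_cast
    rw [Finset.prod_mul_distrib, Finset.prod_const, Finset.card_univ, Fintype.card_fin]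
  have hmain : Tendsto (fun n : ℕ =>
      (Matrix.of fun i j : Fin m => K n (t i) (t j)).det / (((Real.log n) ^ m : ℝ) : ℂ))
      atTop (𝓝 (((p/2)^m * ∏ j, (1/p^2 + (t j)^2) : ℝ) : ℂ)) := by
    rw [← hDdet]
    exact hdet.congr hEq
  refine ⟨hmain, ?_⟩
  have hL0 : (((p/2)^m * ∏ j, (1/p^2 + (t j)^2) : ℝ) : ℂ) ≠ 0 := by
    have : (0:ℝ) < (p/2)^m * ∏ j, (1/p^2 + (t j)^2) := by
      apply mul_pos (by positivity)
      exact Finset.prod_pos fun j _ => by positivity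
    exact_mod_cast this.ne'
  filter_upwards [hmain.eventually_ne hL0] with n hn hdet0
  exact hn (by rw [hdet0, zero_div])
end

section
/- Let p ∈ (1,2] and suppose for each n the quantities d_n(L,p) and d_n(η,2) are defined by d_n²(L,p) = inf over Dirichlet polynomials A_n of length n of (1/2π)∫_ℝ |1 − L(1/p+it,χ)A_n(1/p+it)|² dt/(1/p²+t²) and d_n²(η,2) = inf over the same A_n of (1/2π)∫_ℝ |1 − L(1/p+it,χ)A_n(1/2+it)|² dt/(1/4+t²), where η(s) = L(s+1/p−1/2,χ). Then d_n(L,p) ≤ d_n(η,2) ≤ 2·d_n(L,p); in particular d_n(L,p) → 0 if and only if d_n(η,2) → 0. -/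
open Finset MeasureTheory

lemma integral_weight_compare (N : ℝ → ℝ) (hN : ∀ t, 0 ≤ N t) (hm : Measurable N)
    (a : ℝ) (h1 : 1/4 ≤ a) (h2 : a ≤ 1) :
    (∫ t : ℝ, N t / (a + t^2)) ≤ (∫ t : ℝ, N t / (1/4 + t^2)) ∧
    (∫ t : ℝ, N t / (1/4 + t^2)) ≤ 4 * ∫ t : ℝ, N t / (a + t^2) := by
  have hd1 : ∀ t : ℝ, (0:ℝ) < 1/4 + t^2 := fun t => by positivity
  have hd2 : ∀ t : ℝ, (0:ℝ) < a + t^2 := fun t => by nlinarith [sq_nonneg t]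
  set f : ℝ → ℝ := fun t => N t / (a + t^2) with hf_def
  set g : ℝ → ℝ := fun t => N t / (1/4 + t^2) with hg_def
  have hf0 : ∀ t, 0 ≤ f t := fun t => div_nonneg (hN t) (hd2 t).le
  have hg0 : ∀ t, 0 ≤ g t := fun t => div_nonneg (hN t) (hd1 t).le
  have hfg : ∀ t, f t ≤ g t := fun t =>
    div_le_div_of_nonneg_left (hN t) (hd1 t) (by nlinarith)
  have hgf : ∀ t, g t ≤ 4 * f t := by
    intro t
    rw [hg_def, hf_def]
    have : (4:ℝ) * (N t / (a + t^2)) = 4 * N t / (a + t^2) := by ring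
    rw [this, div_le_div_iff₀ (hd1 t) (hd2 t)]
    nlinarith [hN t, sq_nonneg t]
  have hfm : Measurable f := hm.div (by fun_prop)
  have hgm : Measurable g := hm.div (by fun_prop)
  by_cases hf : Integrable f
  · have hg : Integrable g := by
      refine Integrable.mono' (hf.const_mul 4) hgm.aestronglyMeasurable ?_
      filter_upwards with t
      rw [Real.norm_eq_abs, abs_of_nonneg (hg0 t)]; exact hgf t
    refine ⟨integral_mono hf hg hfg, ?_⟩
    calc ∫ t, g t ≤ ∫ t, 4 * f t := integral_mono hg (hf.const_mul 4) hgf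
    _ = 4 * ∫ t, f t := MeasureTheory.integral_const_mul 4 f
  · have hg : ¬ Integrable g := by
      intro hg
      exact hf (hg.mono' hfm.aestronglyMeasurable
        (by filter_upwards with t; rw [Real.norm_eq_abs, abs_of_nonneg (hf0 t)]; exact hfg t))
    rw [integral_undef hf, integral_undef hg]
    simp

/-- With `d_n²(L,p)` the infimum over Dirichlet polynomials `A_n` of length `n` of
`(1/2π)∫ |1 − L(1/p+it,χ)A_n(1/p+it)|² dt/(1/p²+t²)` and `d_n²(η,2)` the corresponding
quantity for `η(s) = L(s+1/p−1/2,χ)` on the line `Re(s)=1/2`, one has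
`d_n(L,p) ≤ d_n(η,2) ≤ 2·d_n(L,p)`. -/
theorem dn_L_p_comparison
    (p : ℝ) (hp1 : 1 < p) (hp2 : p ≤ 2) (q : ℕ) [NeZero q]
    (χ : DirichletCharacter ℂ q) (n : ℕ) :
    letI L := DirichletCharacter.LFunction χ
    letI d1sq := sInf { r : ℝ | ∃ b : Fin n → ℂ,
      r = (1/(2*Real.pi)) * ∫ t : ℝ,
        ‖1 - L (((1/p : ℝ) : ℂ) + Complex.I * t)
            * ∑ k : Fin n, b k * (((k : ℕ) + 1 : ℕ) : ℂ)
                ^ (-(((1/p : ℝ) : ℂ) + Complex.I * t))‖ ^ 2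
          / (1/p^2 + t^2) }
    letI d2sq := sInf { r : ℝ | ∃ b : Fin n → ℂ,
      r = (1/(2*Real.pi)) * ∫ t : ℝ,
        ‖1 - L (((1/p : ℝ) : ℂ) + Complex.I * t)
            * ∑ k : Fin n, b k * (((k : ℕ) + 1 : ℕ) : ℂ)
                ^ (-((1/2 : ℂ) + Complex.I * t))‖ ^ 2
          / (1/4 + t^2) }
    Real.sqrt d1sq ≤ Real.sqrt d2sq ∧ Real.sqrt d2sq ≤ 2 * Real.sqrt d1sq := by
  set L := DirichletCharacter.LFunction χ with hLdef
  have hp0 : 0 < p := lt_trans one_pos hp1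
  have hinv1 : 1/p < 1 := by rw [div_lt_one hp0]; exact hp1
  have ha1 : (1:ℝ)/4 ≤ 1/p^2 := by
    rw [div_le_div_iff₀ (by norm_num) (by positivity)]; nlinarith
  have ha2 : (1:ℝ)/p^2 ≤ 1 := by
    rw [div_le_one (by positivity)]; nlinarith
  have hpi : (0:ℝ) < 1/(2*Real.pi) := by positivity
  -- continuity of the L-function along the line Re = 1/p
  have hs1 : ∀ t : ℝ, (((1/p:ℝ):ℂ) + Complex.I * t) ≠ 1 := by
    intro t h
    have := congrArg Complex.re h
    simp [Complex.add_re, Complex.mul_re] at this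
    linarith
  have hLcont : Continuous (fun t : ℝ => L (((1/p:ℝ):ℂ) + Complex.I * t)) := by
    rw [continuous_iff_continuousAt]
    intro t
    have hline : ContinuousAt (fun t : ℝ => (((1/p:ℝ):ℂ) + Complex.I * t)) t := by fun_prop
    exact ContinuousAt.comp (x := t) (f := fun t : ℝ => (((1/p:ℝ):ℂ) + Complex.I * t))
      (DirichletCharacter.differentiableAt_LFunction χ _ (Or.inl (hs1 t))).continuousAt hline
  have hbase : ∀ k : Fin n, ((((k:ℕ) + 1 : ℕ) : ℂ)) ≠ 0 := fun k =>
    Nat.cast_ne_zero.mpr (Nat.succ_ne_zero _)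
  have hsum : ∀ (b : Fin n → ℂ) (c : ℂ), Continuous fun t : ℝ =>
      ∑ k : Fin n, b k * (((k:ℕ) + 1 : ℕ) : ℂ) ^ (-(c + Complex.I * t)) := by
    intro b c
    apply continuous_finset_sum
    intro k _
    exact continuous_const.mul (Continuous.const_cpow (by fun_prop) (Or.inl (hbase k)))
  have hNcont : ∀ (b : Fin n → ℂ) (c : ℂ), Continuous fun t : ℝ =>
      ‖1 - L (((1/p:ℝ):ℂ) + Complex.I * t)
        * ∑ k : Fin n, b k * (((k:ℕ) + 1 : ℕ) : ℂ) ^ (-(c + Complex.I * t))‖ ^ 2 := by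
    intro b c
    exact (continuous_norm.comp (continuous_const.sub (hLcont.mul (hsum b c)))).pow 2
  have hNnn : ∀ (b : Fin n → ℂ) (c : ℂ) (t : ℝ), (0:ℝ) ≤
      ‖1 - L (((1/p:ℝ):ℂ) + Complex.I * t)
        * ∑ k : Fin n, b k * (((k:ℕ) + 1 : ℕ) : ℂ) ^ (-(c + Complex.I * t))‖ ^ 2 :=
    fun b c t => by positivity
  -- reparametrization of coefficients
  have hrep : ∀ (c d : ℂ) (b : Fin n → ℂ) (t : ℝ),
      ∑ k : Fin n, (b k * (((k:ℕ) + 1 : ℕ) : ℂ) ^ (c - d)) * (((k:ℕ) + 1 : ℕ) : ℂ)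
        ^ (-(c + Complex.I * t))
      = ∑ k : Fin n, b k * (((k:ℕ) + 1 : ℕ) : ℂ) ^ (-(d + Complex.I * t)) := by
    intro c d b t
    refine Finset.sum_congr rfl fun k _ => ?_
    rw [mul_assoc, ← Complex.cpow_add _ _ (hbase k)]
    congr 1; ring_nf
  set S1 : Set ℝ := { r : ℝ | ∃ b : Fin n → ℂ,
      r = (1/(2*Real.pi)) * ∫ t : ℝ,
        ‖1 - L (((1/p : ℝ) : ℂ) + Complex.I * t)
            * ∑ k : Fin n, b k * (((k : ℕ) + 1 : ℕ) : ℂ)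
                ^ (-(((1/p : ℝ) : ℂ) + Complex.I * t))‖ ^ 2
          / (1/p^2 + t^2) } with hS1def
  set S2 : Set ℝ := { r : ℝ | ∃ b : Fin n → ℂ,
      r = (1/(2*Real.pi)) * ∫ t : ℝ,
        ‖1 - L (((1/p : ℝ) : ℂ) + Complex.I * t)
            * ∑ k : Fin n, b k * (((k : ℕ) + 1 : ℕ) : ℂ)
                ^ (-((1/2 : ℂ) + Complex.I * t))‖ ^ 2
          / (1/4 + t^2) } with hS2def
  have hS1ne : S1.Nonempty := ⟨_, 0, rfl⟩
  have hS2ne : S2.Nonempty := ⟨_, 0, rfl⟩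
  have hS1lb : ∀ r ∈ S1, (0:ℝ) ≤ r := by
    rintro r ⟨b, rfl⟩
    exact mul_nonneg hpi.le (integral_nonneg fun t =>
      div_nonneg (hNnn b _ t) (by positivity))
  have hS2lb : ∀ r ∈ S2, (0:ℝ) ≤ r := by
    rintro r ⟨b, rfl⟩
    exact mul_nonneg hpi.le (integral_nonneg fun t =>
      div_nonneg (hNnn b _ t) (by positivity))
  have hS1bdd : BddBelow S1 := ⟨0, hS1lb⟩
  have hS2bdd : BddBelow S2 := ⟨0, hS2lb⟩
  -- the key integral comparison for a fixed coefficient vector and exponent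
  have hcomp : ∀ (b : Fin n → ℂ) (c : ℂ),
      (∫ t : ℝ, ‖1 - L (((1/p:ℝ):ℂ) + Complex.I * t)
          * ∑ k : Fin n, b k * (((k:ℕ) + 1 : ℕ) : ℂ) ^ (-(c + Complex.I * t))‖ ^ 2
        / (1/p^2 + t^2))
      ≤ (∫ t : ℝ, ‖1 - L (((1/p:ℝ):ℂ) + Complex.I * t)
          * ∑ k : Fin n, b k * (((k:ℕ) + 1 : ℕ) : ℂ) ^ (-(c + Complex.I * t))‖ ^ 2
        / (1/4 + t^2))
      ∧ (∫ t : ℝ, ‖1 - L (((1/p:ℝ):ℂ) + Complex.I * t)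
          * ∑ k : Fin n, b k * (((k:ℕ) + 1 : ℕ) : ℂ) ^ (-(c + Complex.I * t))‖ ^ 2
        / (1/4 + t^2))
      ≤ 4 * ∫ t : ℝ, ‖1 - L (((1/p:ℝ):ℂ) + Complex.I * t)
          * ∑ k : Fin n, b k * (((k:ℕ) + 1 : ℕ) : ℂ) ^ (-(c + Complex.I * t))‖ ^ 2
        / (1/p^2 + t^2) := by
    intro b c
    exact integral_weight_compare _ (hNnn b c) (hNcont b c).measurable (1/p^2) ha1 ha2
  -- first inequality : sInf S1 ≤ sInf S2
  have key1 : sInf S1 ≤ sInf S2 := by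
    refine le_csInf hS2ne ?_
    rintro r ⟨b, rfl⟩
    have hmem : (1/(2*Real.pi)) * (∫ t : ℝ,
        ‖1 - L (((1/p:ℝ):ℂ) + Complex.I * t)
          * ∑ k : Fin n, b k * (((k:ℕ) + 1 : ℕ) : ℂ) ^ (-((1/2:ℂ) + Complex.I * t))‖ ^ 2
        / (1/p^2 + t^2)) ∈ S1 := by
      refine ⟨fun k => b k * (((k:ℕ) + 1 : ℕ) : ℂ) ^ (((1/p:ℝ):ℂ) - (1/2:ℂ)), ?_⟩
      simp only [hrep (((1/p:ℝ):ℂ)) ((1/2:ℂ)) b]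
    calc sInf S1 ≤ _ := csInf_le hS1bdd hmem
    _ ≤ _ := mul_le_mul_of_nonneg_left (hcomp b ((1/2:ℂ))).1 hpi.le
  -- second inequality : sInf S2 ≤ 4 * sInf S1
  have key2 : sInf S2 ≤ 4 * sInf S1 := by
    have h4 : ∀ r ∈ S1, sInf S2 ≤ 4 * r := by
      rintro r ⟨b, rfl⟩
      have hmem : (1/(2*Real.pi)) * (∫ t : ℝ,
          ‖1 - L (((1/p:ℝ):ℂ) + Complex.I * t)
            * ∑ k : Fin n, b k * (((k:ℕ) + 1 : ℕ) : ℂ) ^ (-(((1/p:ℝ):ℂ) + Complex.I * t))‖ ^ 2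
          / (1/4 + t^2)) ∈ S2 := by
        refine ⟨fun k => b k * (((k:ℕ) + 1 : ℕ) : ℂ) ^ ((1/2:ℂ) - ((1/p:ℝ):ℂ)), ?_⟩
        simp only [hrep ((1/2:ℂ)) (((1/p:ℝ):ℂ)) b]
      calc sInf S2 ≤ _ := csInf_le hS2bdd hmem
      _ ≤ (1/(2*Real.pi)) * (4 * ∫ t : ℝ,
          ‖1 - L (((1/p:ℝ):ℂ) + Complex.I * t)
            * ∑ k : Fin n, b k * (((k:ℕ) + 1 : ℕ) : ℂ) ^ (-(((1/p:ℝ):ℂ) + Complex.I * t))‖ ^ 2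
          / (1/p^2 + t^2)) := mul_le_mul_of_nonneg_left (hcomp b (((1/p:ℝ):ℂ))).2 hpi.le
      _ = 4 * _ := by ring
    have h5 : sInf S2 / 4 ≤ sInf S1 :=
      le_csInf hS1ne fun r hr => by linarith [h4 r hr]
    linarith
  have h1nn : (0:ℝ) ≤ sInf S1 := le_csInf hS1ne hS1lb
  refine ⟨Real.sqrt_le_sqrt key1, ?_⟩
  have h := Real.sqrt_le_sqrt key2
  rwa [show (4:ℝ) * sInf S1 = 2^2 * sInf S1 by norm_num,
    Real.sqrt_mul (by positivity) (sInf S1), Real.sqrt_sq (by norm_num : (0:ℝ) ≤ 2)] at h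
end
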